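/- For any permutation p of {1,...,n}, the number of entries positioned strictly between the values 1 and 2 in SC_231(p) is at most the number of entries positioned strictly between the values 1 and 2 in p. -/

import Mathlib

/-- One step-by-step implementation of the `SC_231` stack-sorting machine.
`sc231Aux input stack out`: the next input entry is pushed onto the stack unless
pushing it would create a consecutive occurrence of the pattern `231` read from
top to bottom among the stack entries (i.e. the incoming `x` on top of `y`, `z`
with `z < x < y`), in which case the top of the stack is popped and appended to
the output; once the input is exhausted the remaining stack entries are popped. -/
def sc231Aux : List ℕ → List ℕ → List ℕ → List ℕ
  | [], stack, out => out ++ stack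
  | x :: rest, y :: z :: s, out =>
      if z < x ∧ x < y then sc231Aux (x :: rest) (z :: s) (out ++ [y])
      else sc231Aux rest (x :: y :: z :: s) out
  | x :: rest, stack, out => sc231Aux rest (x :: stack) out
termination_by input stack _ => 2 * input.length + stack.length
decreasing_by all_goals (simp; try omega)

/-- The consecutive-pattern-avoiding stack sort map `SC_231`. -/
def SC231 (p : List ℕ) : List ℕ := sc231Aux p [] []

/-- The list of entries that are *pre-popped* while `SC_231` processes the
input, i.e. popped while input entries still remain. -/
def prePopsAux : List ℕ → List ℕ → List ℕ
  | [], _ => []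
  | x :: rest, y :: z :: s =>
      if z < x ∧ x < y then y :: prePopsAux (x :: rest) (z :: s)
      else prePopsAux rest (x :: y :: z :: s)
  | x :: rest, stack => prePopsAux rest (x :: stack)
termination_by input stack => 2 * input.length + stack.length
decreasing_by all_goals (simp; try omega)

def prePops (p : List ℕ) : List ℕ := prePopsAux p []

/-- `p` has a peak: an interior position whose entry exceeds both neighbours. -/
def HasPeak (p : List ℕ) : Prop :=
  ∃ i, i + 2 < p.length ∧ p[i]! < p[i+1]! ∧ p[i+2]! < p[i+1]!

/-- `p` is a permutation of `{1, …, n}` (written as a list of its entries). -/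
def IsPermOf (n : ℕ) (p : List ℕ) : Prop := p.Perm (List.range' 1 n)

/-- `p` contains the (classical) pattern `q`. -/
def ContainsPat (p q : List ℕ) : Prop :=
  ∃ s : List ℕ, s.Sublist p ∧ s.length = q.length ∧
    ∀ i j, i < s.length → j < s.length → (s[i]! < s[j]! ↔ q[i]! < q[j]!)

def AvoidsPat (p q : List ℕ) : Prop := ¬ ContainsPat p q

/-- The sort-number of `p`: the least `k` with `SC_231^k(p)` peakless. -/
noncomputable def sortNum (p : List ℕ) : ℕ := sInf {k | ¬ HasPeak (SC231^[k] p)}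

/-- The number of entries strictly between the values `1` and `2` in a permutation. -/
def between12 (p : List ℕ) : ℕ :=
  max (p.idxOf 1) (p.idxOf 2) - min (p.idxOf 1) (p.idxOf 2) - 1

def meas (input stack : List ℕ) : ℕ :=
  if 1 ∈ stack ∧ 2 ∈ stack then between12 stack
  else if 1 ∈ stack then stack.idxOf 1 + input.idxOf 2
  else if 2 ∈ stack then stack.idxOf 2 + input.idxOf 1
  else between12 input

lemma between12_cons {x : ℕ} (l : List ℕ) (h1 : x ≠ 1) (h2 : x ≠ 2) :
    between12 (x :: l) = between12 l := by
  simp [between12, List.idxOf_cons_ne _ h1, List.idxOf_cons_ne _ h2, Nat.succ_eq_add_one] <;> try omega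

lemma meas_pop (input : List ℕ) (y : ℕ) (zs : List ℕ) (hy1 : y ≠ 1) (hy2 : y ≠ 2) :
    meas input zs ≤ meas input (y :: zs) := by
  have m1 : (1 ∈ y :: zs) ↔ 1 ∈ zs := by simp [Ne.symm hy1]
  have m2 : (2 ∈ y :: zs) ↔ 2 ∈ zs := by simp [Ne.symm hy2]
  by_cases h1 : (1:ℕ) ∈ zs <;> by_cases h2 : (2:ℕ) ∈ zs <;>
    simp [meas, m1, m2, h1, h2, between12_cons zs hy1 hy2,
      List.idxOf_cons_ne _ hy1, List.idxOf_cons_ne _ hy2, Nat.succ_eq_add_one] <;>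
    omega

lemma meas_push (x : ℕ) (rest stack : List ℕ)
    (h1s : x = 1 → (1:ℕ) ∉ stack) (h2s : x = 2 → (2:ℕ) ∉ stack) :
    meas rest (x :: stack) ≤ meas (x :: rest) stack := by
  by_cases hx1 : x = 1
  · subst hx1
    have h1 := h1s rfl
    by_cases h2 : (2:ℕ) ∈ stack
    · have : ((1:ℕ) ∈ 1 :: stack ∧ (2:ℕ) ∈ 1 :: stack) := by simp [h2]
      simp [meas, this, h1, h2, between12, List.idxOf_cons_self,
        List.idxOf_cons_ne stack (by norm_num : (1:ℕ) ≠ 2),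
        List.idxOf_cons_ne rest (by norm_num : (1:ℕ) ≠ 2), Nat.succ_eq_add_one] <;> try omega
    · have h2' : (2:ℕ) ∉ (1:ℕ) :: stack := by simp [h2]
      simp [meas, h1, h2, h2', List.idxOf_cons_self, between12,
        List.idxOf_cons_ne rest (by norm_num : (1:ℕ) ≠ 2), Nat.succ_eq_add_one] <;> try omega
  · by_cases hx2 : x = 2
    · subst hx2
      have h2 := h2s rfl
      by_cases h1 : (1:ℕ) ∈ stack
      · have : ((1:ℕ) ∈ 2 :: stack ∧ (2:ℕ) ∈ 2 :: stack) := by simp [h1]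
        simp [meas, this, h1, h2, between12, List.idxOf_cons_self,
          List.idxOf_cons_ne stack (by norm_num : (2:ℕ) ≠ 1),
          List.idxOf_cons_ne rest (by norm_num : (2:ℕ) ≠ 1), Nat.succ_eq_add_one] <;> try omega
      · have h1' : (1:ℕ) ∉ (2:ℕ) :: stack := by simp [h1]
        simp [meas, h1, h2, h1', List.idxOf_cons_self, between12,
          List.idxOf_cons_ne rest (by norm_num : (2:ℕ) ≠ 1), Nat.succ_eq_add_one] <;> try omega
    · have m1 : ((1:ℕ) ∈ x :: stack) ↔ (1:ℕ) ∈ stack := by simp [Ne.symm hx1, hx1]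
      have m2 : ((2:ℕ) ∈ x :: stack) ↔ (2:ℕ) ∈ stack := by simp [Ne.symm hx2, hx2]
      by_cases h1 : (1:ℕ) ∈ stack <;> by_cases h2 : (2:ℕ) ∈ stack <;>
        simp [meas, m1, m2, h1, h2, between12_cons stack hx1 hx2,
          between12_cons rest hx1 hx2,
          List.idxOf_cons_ne _ hx1, List.idxOf_cons_ne _ hx2, Nat.succ_eq_add_one] <;>
        omega

lemma count_shift (a x : ℕ) (rest stack : List ℕ) :
    (rest ++ (x :: stack)).count a = ((x :: rest) ++ stack).count a := by
  simp only [List.count_append, List.count_cons]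
  omega

lemma sc231Aux_between (input stack out : List ℕ) :
    (∀ e ∈ input, 1 ≤ e) → (∀ e ∈ stack, 1 ≤ e) →
    (input ++ stack).count 1 = 1 → (input ++ stack).count 2 = 1 →
    (1:ℕ) ∉ out → (2:ℕ) ∉ out →
    between12 (sc231Aux input stack out) ≤ meas input stack := by
  induction input, stack, out using sc231Aux.induct with
  | case1 stack out =>
    intro _ _ hc1 hc2 ho1 ho2
    simp only [List.nil_append] at hc1 hc2
    have h1 : (1:ℕ) ∈ stack := List.count_pos_iff.mp (by omega)
    have h2 : (2:ℕ) ∈ stack := List.count_pos_iff.mp (by omega)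
    have : sc231Aux [] stack out = out ++ stack := by rw [sc231Aux]
    rw [this]
    have e1 : (out ++ stack).idxOf 1 = out.length + stack.idxOf 1 :=
      List.idxOf_append_of_notMem ho1
    have e2 : (out ++ stack).idxOf 2 = out.length + stack.idxOf 2 :=
      List.idxOf_append_of_notMem ho2
    simp only [meas, h1, h2, and_self, if_true, between12, e1, e2]
    omega
  | case2 x rest y z s out hcond ih =>
    intro hin hstk hc1 hc2 ho1 ho2
    have hz : 1 ≤ z := hstk z (by simp)
    have hy1 : y ≠ 1 := by omega
    have hy2 : y ≠ 2 := by omega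
    have hstep : sc231Aux (x :: rest) (y :: z :: s) out
        = sc231Aux (x :: rest) (z :: s) (out ++ [y]) := by
      rw [sc231Aux]; simp [hcond]
    rw [hstep]
    have hcnt : ∀ a : ℕ, y ≠ a →
        ((x :: rest) ++ (z :: s)).count a = ((x :: rest) ++ (y :: z :: s)).count a := by
      intro a ha
      simp only [List.count_append, List.count_cons, beq_iff_eq, if_neg ha]
      omega
    refine le_trans (ih hin (fun e he => hstk e (by simp at he ⊢; tauto))
      (by rw [hcnt 1 hy1]; exact hc1) (by rw [hcnt 2 hy2]; exact hc2)
      (by simp [ho1, Ne.symm hy1]) (by simp [ho2, Ne.symm hy2])) ?_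
    exact meas_pop _ y _ hy1 hy2
  | case3 x rest y z s out hcond ih =>
    intro hin hstk hc1 hc2 ho1 ho2
    have hstep : sc231Aux (x :: rest) (y :: z :: s) out
        = sc231Aux rest (x :: y :: z :: s) out := by
      rw [sc231Aux]; simp [hcond]
    rw [hstep]
    refine le_trans (ih (fun e he => hin e (by simp [he]))
      (fun e he => by simp at he; rcases he with h|h|h|h; exacts [h ▸ hin x (by simp), hstk e (by simp [h]), hstk e (by simp [h]), hstk e (by simp [h])])
      (by rw [count_shift]; exact hc1) (by rw [count_shift]; exact hc2) ho1 ho2) ?_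
    apply meas_push
    · intro hx; subst hx
      rw [← List.count_eq_zero]
      simp only [List.count_append, List.count_cons, beq_self_eq_true, if_true] at hc1
      simp only [List.count_cons]
      omega
    · intro hx; subst hx
      rw [← List.count_eq_zero]
      simp only [List.count_append, List.count_cons, beq_self_eq_true, if_true] at hc2
      simp only [List.count_cons]
      omega
  | case4 x rest stack out hshort ih =>
    intro hin hstk hc1 hc2 ho1 ho2
    have hstep : sc231Aux (x :: rest) stack out = sc231Aux rest (x :: stack) out := by
      match stack, hshort with
      | [], _ => rw [sc231Aux] <;> simp
      | [y], _ => rw [sc231Aux] <;> simp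
      | y :: z :: s, h => exact absurd (h y z s rfl) (by simp)
    rw [hstep]
    refine le_trans (ih (fun e he => hin e (by simp [he]))
      (fun e he => by simp at he; rcases he with h|h; exacts [h ▸ hin x (by simp), hstk e h])
      (by rw [count_shift]; exact hc1) (by rw [count_shift]; exact hc2) ho1 ho2) ?_
    apply meas_push
    · intro hx; subst hx
      rw [← List.count_eq_zero]
      simp only [List.count_append, List.count_cons, beq_self_eq_true, if_true] at hc1
      omega
    · intro hx; subst hx
      rw [← List.count_eq_zero]
      simp only [List.count_append, List.count_cons, beq_self_eq_true, if_true] at hc2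
      omega


/-- Applying `SC_231` never increases the number of entries between the values `1` and `2`. -/
theorem between12_SC231_le (n : ℕ) (hn : 2 ≤ n) (p : List ℕ) (hp : IsPermOf n p) :
    between12 (SC231 p) ≤ between12 p := by
  have hpos : ∀ e ∈ p, 1 ≤ e := fun e he => (List.mem_range'_1.mp (hp.subset he)).1
  have hc1 : p.count 1 = 1 := by
    rw [hp.count_eq]
    exact List.count_eq_one_of_mem (List.nodup_range' (s := 1) (n := n)) (by simp [List.mem_range'_1]; omega)
  have hc2 : p.count 2 = 1 := by
    rw [hp.count_eq]
    exact List.count_eq_one_of_mem (List.nodup_range' (s := 1) (n := n)) (by simp [List.mem_range'_1]; omega)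
  have key := sc231Aux_between p [] [] hpos (by simp) (by simpa using hc1)
    (by simpa using hc2) (by simp) (by simp)
  have hm : meas p [] = between12 p := by simp [meas]
  rw [SC231, ← hm]; exact key
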